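/- arXiv:2108.06787 — 4 statements merged into one kernel-verified Lean document; each statement's English description precedes it below -/
import Mathlib

section
/- Let F : U → ℂ with U ⊆ ℂ open, let z ∈ ℂ with z ≠ 0 and 1/z̄ ∈ U, and suppose F is real-differentiable at 1/z̄ with F(1/z̄) ≠ 0. Define G(ζ) = 1/conj(F(1/ζ̄)) for ζ near z. Then G is real-differentiable at z and its Wirtinger derivatives satisfy G_z(z) = conj(F_z(1/z̄)) / (z² · conj(F(1/z̄))²) and (Ḡ)_z(z) = conj((F̄)_z(1/z̄)) / (z² · F(1/z̄)²), where F̄ and Ḡ denote the pointwise complex conjugates of F and G. -/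
open Complex

private lemma alg_aux (X Y u v w2 : ℂ) :
    (((u + v) / 2 * X + (u - v) / (2 * Complex.I) * Y) * w2 -
        Complex.I * (((u - v) / (2 * Complex.I) * X - (u + v) / 2 * Y) * w2)) / 2 =
      v * w2 * (X + Complex.I * Y) / 2 := by
  have h2I : ∀ t : ℂ, t / (2 * Complex.I) = t * (-Complex.I) / 2 := fun t => by
    rw [div_eq_mul_inv, mul_inv, Complex.inv_I]; ring
  rw [h2I]
  linear_combination (((u - v) * X * w2) / 4) * Complex.I_sq

noncomputable def wirtingerZ (f : ℂ → ℂ) (z : ℂ) : ℂ :=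
  ((fderiv ℝ f z) 1 - Complex.I * (fderiv ℝ f z) Complex.I) / 2

set_option maxHeartbeats 1000000 in
/-- Wirtinger derivatives of the inversion reflection
`G(ζ) = 1/conj(F(1/ζ̄))`: if `F` is real-differentiable at `1/z̄` with
`F(1/z̄) ≠ 0` and `z ≠ 0`, then `G` is real-differentiable at `z`,
`G_z(z) = conj(F_z(1/z̄)) / (z²·conj(F(1/z̄))²)` and
`(Ḡ)_z(z) = conj((F̄)_z(1/z̄)) / (z²·F(1/z̄)²)`. -/
theorem stmt_5 (U : Set ℂ) (hU : IsOpen U) (F : ℂ → ℂ) (z : ℂ) (hz : z ≠ 0)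
    (hmem : ((starRingEnd ℂ) z)⁻¹ ∈ U)
    (hF : DifferentiableAt ℝ F ((starRingEnd ℂ) z)⁻¹)
    (hFne : F ((starRingEnd ℂ) z)⁻¹ ≠ 0)
    (G : ℂ → ℂ) (hG : G = fun ζ => ((starRingEnd ℂ) (F ((starRingEnd ℂ) ζ)⁻¹))⁻¹) :
    DifferentiableAt ℝ G z ∧
    wirtingerZ G z =
      (starRingEnd ℂ) (wirtingerZ F ((starRingEnd ℂ) z)⁻¹) /
        (z ^ 2 * ((starRingEnd ℂ) (F ((starRingEnd ℂ) z)⁻¹)) ^ 2) ∧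
    wirtingerZ (fun ζ => (starRingEnd ℂ) (G ζ)) z =
      (starRingEnd ℂ) (wirtingerZ (fun ζ => (starRingEnd ℂ) (F ζ)) ((starRingEnd ℂ) z)⁻¹) /
        (z ^ 2 * (F ((starRingEnd ℂ) z)⁻¹) ^ 2) := by
  have hcz : (starRingEnd ℂ) z ≠ 0 := by simpa using hz
  set w : ℂ := ((starRingEnd ℂ) z)⁻¹ with hwdef
  set a : ℂ := F w with hadef
  have hca : (starRingEnd ℂ) a ≠ 0 := by simpa using hFne
  have hC : ∀ x : ℂ, HasFDerivAt (starRingEnd ℂ) (Complex.conjCLE : ℂ →L[ℝ] ℂ) x := by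
    intro x
    convert Complex.conjCLE.hasFDerivAt (x := x) using 1
    all_goals rfl
  set L : ℂ →L[ℝ] ℂ := fderiv ℝ F w with hLdef
  have hFd : HasFDerivAt F L w := hF.hasFDerivAt
  have h2 : HasFDerivAt (fun y : ℂ => y⁻¹)
      ((ContinuousLinearMap.smulRight (1 : ℂ →L[ℂ] ℂ)
        (-((starRingEnd ℂ) z ^ 2)⁻¹)).restrictScalars ℝ) ((starRingEnd ℂ) z) :=
    ((hasDerivAt_inv hcz).hasFDerivAt).restrictScalars ℝ
  have h12 := h2.comp z (hC z)
  have h3 := hFd.comp z h12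
  have h4 := (hC (F w)).comp z h3
  have h5' : HasFDerivAt (fun y : ℂ => y⁻¹)
      ((ContinuousLinearMap.smulRight (1 : ℂ →L[ℂ] ℂ)
        (-((starRingEnd ℂ) a ^ 2)⁻¹)).restrictScalars ℝ) ((starRingEnd ℂ) a) :=
    ((hasDerivAt_inv hca).hasFDerivAt).restrictScalars ℝ
  have h5 := h5'.comp z h4
  set C : ℂ →L[ℝ] ℂ := (Complex.conjCLE : ℂ →L[ℝ] ℂ) with hCdef
  set D : ℂ →L[ℝ] ℂ :=
    ((ContinuousLinearMap.smulRight (1 : ℂ →L[ℂ] ℂ)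
      (-((starRingEnd ℂ) a ^ 2)⁻¹)).restrictScalars ℝ).comp
      (C.comp (L.comp (((ContinuousLinearMap.smulRight (1 : ℂ →L[ℂ] ℂ)
        (-((starRingEnd ℂ) z ^ 2)⁻¹)).restrictScalars ℝ).comp C))) with hDdef
  have hGd : HasFDerivAt G D z := by rw [hG]; exact h5
  have hval : ∀ v : ℂ, D v =
      (starRingEnd ℂ) (L ((starRingEnd ℂ) v * -((starRingEnd ℂ) z ^ 2)⁻¹)) *
        -((starRingEnd ℂ) a ^ 2)⁻¹ := by
    intro v
    simp [hDdef, hCdef, ContinuousLinearMap.comp_apply, smul_eq_mul, mul_comm]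
  set c : ℂ := -((starRingEnd ℂ) z ^ 2)⁻¹ with hcdef
  set c₂ : ℂ := -((starRingEnd ℂ) a ^ 2)⁻¹ with hc2def
  have key : ∀ u : ℂ, L u = (u.re : ℂ) * L 1 + (u.im : ℂ) * L Complex.I := by
    intro u
    conv_lhs => rw [show u = u.re • (1 : ℂ) + u.im • Complex.I by
      simp [Complex.real_smul, Complex.re_add_im]]
    rw [map_add, map_smul, map_smul]
    simp [Complex.real_smul]
  have e1 : L c = (c.re : ℂ) * L 1 + (c.im : ℂ) * L Complex.I := key c
  have hCapp : ∀ x : ℂ, C x = (starRingEnd ℂ) x := fun x => Complex.conjCLE_apply x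
  have e2 : L (-Complex.I * c) = (c.im : ℂ) * L 1 - (c.re : ℂ) * L Complex.I := by
    rw [key (-Complex.I * c)]
    push_cast
    simp
    ring
  have hcre : ((c.re : ℝ) : ℂ) = (c + (starRingEnd ℂ) c) / 2 := by
    rw [Complex.add_conj]; push_cast; ring
  have hcim : ((c.im : ℝ) : ℂ) = (c - (starRingEnd ℂ) c) / (2 * Complex.I) := by
    rw [Complex.sub_conj]
    field_simp
    push_cast
    ring
  have hconjc : (starRingEnd ℂ) c = -(z ^ 2)⁻¹ := by
    simp [hcdef]
  have hconjc2 : (starRingEnd ℂ) c₂ = -(a ^ 2)⁻¹ := by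
    simp [hc2def]
  clear_value w a L C D c c₂
  refine ⟨hGd.differentiableAt, ?_, ?_⟩
  · unfold wirtingerZ
    rw [hGd.fderiv, ← hLdef]
    rw [hval 1, hval Complex.I]
    simp only [map_one, one_mul, Complex.conj_I, ← hcdef, ← hc2def]
    rw [e1, e2]
    simp only [map_add, map_mul, map_sub, map_div₀, map_neg, map_inv₀, map_pow, map_one,
      map_ofNat, Complex.conj_conj, Complex.conj_ofReal, Complex.conj_I]
    rw [hcre, hcim, hconjc, hcdef, hc2def]
    rw [alg_aux ((starRingEnd ℂ) (L 1)) ((starRingEnd ℂ) (L Complex.I))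
      (-((starRingEnd ℂ) z ^ 2)⁻¹) (-(z ^ 2)⁻¹) (-((starRingEnd ℂ) a ^ 2)⁻¹)]
    ring
  · have hG2 : HasFDerivAt (fun ζ => (starRingEnd ℂ) (G ζ)) (C.comp D) z :=
      (hC (G z)).comp z hGd
    have hF2 : HasFDerivAt (fun ζ => (starRingEnd ℂ) (F ζ)) (C.comp L) w :=
      (hC (F w)).comp w hFd
    unfold wirtingerZ
    rw [hG2.fderiv, hF2.fderiv]
    have hval2 : ∀ v : ℂ, (C.comp D) v = L ((starRingEnd ℂ) v * c) * (starRingEnd ℂ) c₂ := by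
      intro v
      rw [ContinuousLinearMap.comp_apply, hval v, hCapp, map_mul, Complex.conj_conj]
    rw [hval2 1, hval2 Complex.I]
    have hCval : ∀ v : ℂ, (C.comp L) v = (starRingEnd ℂ) (L v) := by
      intro v
      rw [ContinuousLinearMap.comp_apply, hCapp]
    rw [hCval 1, hCval Complex.I]
    simp only [map_one, one_mul, Complex.conj_I, hconjc2]
    rw [e1, e2]
    simp only [map_add, map_mul, map_sub, map_div₀, map_neg, map_inv₀, map_pow, map_one,
      map_ofNat, Complex.conj_conj, Complex.conj_ofReal, Complex.conj_I]
    rw [hcre, hcim, hconjc, hcdef]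
    rw [alg_aux (L 1) (L Complex.I)
      (-((starRingEnd ℂ) z ^ 2)⁻¹) (-(z ^ 2)⁻¹) (-(a ^ 2)⁻¹)]
    ring
end

section
/- Let 0 < r < 1 < R, let A(1,R) = {w ∈ ℂ : 1 < |w| < R}, and let F : A(1,R) → ℂ and ρ₁ be a positive function on the range of F. Let c ∈ ℝ, and suppose that for every w ∈ A(1,R), F is real-differentiable at w, F(w) ≠ 0, and ρ₁(F(w))²·F_w(w)·(F̄)_w(w) = c/w². For 1/R < |z| < 1 define F̃(z) = 1/conj(F(1/z̄)) and define ρ̃ on the range of F̃ by ρ̃(u) = ρ₁(1/ū). Then for every z with 1/R < |z| < 1, ρ̃(F̃(z))²·F̃_z(z)·(conj F̃)_z(z) = (1/|F(1/z̄)|⁴)·(c/z²). -/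
lemma Lexp (M : ℂ →L[ℝ] ℂ) (u : ℂ) : M u = u.re • M 1 + u.im • M Complex.I := by
  conv_lhs => rw [← Complex.re_add_im u]
  rw [show ((u.re : ℂ) + (u.im : ℂ) * Complex.I) = u.re • (1:ℂ) + u.im • Complex.I by
    simp [Complex.real_smul], map_add, map_smul, map_smul]

lemma negI_mul_re (u : ℂ) : (-Complex.I * u).re = u.im := by simp
lemma negI_mul_im (u : ℂ) : (-Complex.I * u).im = -u.re := by simp

lemma conj_expand (u : ℂ) :
    (starRingEnd ℂ) u = (u.re : ℂ) - (u.im : ℂ) * Complex.I := by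
  apply Complex.ext <;> simp

lemma wz_keyA (M : ℂ →L[ℝ] ℂ) (u : ℂ) :
    M u - Complex.I * M (-Complex.I * u) =
      (starRingEnd ℂ) u * (M 1 + Complex.I * M Complex.I) := by
  rw [Lexp M u, Lexp M (-Complex.I * u), negI_mul_re, negI_mul_im, conj_expand]
  simp only [Complex.real_smul, Complex.ofReal_neg]
  linear_combination ((u.im : ℂ) * M Complex.I) * Complex.I_sq

lemma wz_keyB (M : ℂ →L[ℝ] ℂ) (u : ℂ) :
    (starRingEnd ℂ) (M u) - Complex.I * (starRingEnd ℂ) (M (-Complex.I * u)) =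
      (starRingEnd ℂ) u *
        ((starRingEnd ℂ) (M 1) + Complex.I * (starRingEnd ℂ) (M Complex.I)) := by
  rw [Lexp M u, Lexp M (-Complex.I * u), negI_mul_re, negI_mul_im]
  simp only [Complex.real_smul, Complex.ofReal_neg, map_add, map_mul,
    Complex.conj_ofReal, map_neg]
  linear_combination ((u.im : ℂ) * (starRingEnd ℂ) (M Complex.I)) * Complex.I_sq -
    ((starRingEnd ℂ) (M 1) + Complex.I * (starRingEnd ℂ) (M Complex.I)) * conj_expand u

set_option maxHeartbeats 1000000 in
/-- Hopf-product identity for the inner reflection. If on the annulus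
`A(1,R)` the map `F` satisfies `ρ₁(F(w))²·F_w(w)·(F̄)_w(w) = c/w²` with `c ∈ ℝ`,
`F` real-differentiable and nonvanishing, then the reflected map
`F̃(z) = 1/conj(F(1/z̄))` with the reflected weight `ρ̃(u) = ρ₁(1/ū)` satisfies
`ρ̃(F̃(z))²·F̃_z(z)·(conj F̃)_z(z) = (1/|F(1/z̄)|⁴)·(c/z²)` for `1/R < |z| < 1`. -/
theorem stmt_6 (r R : ℝ) (hr0 : 0 < r) (hr1 : r < 1) (hR : 1 < R)
    (F : ℂ → ℂ) (ρ₁ : ℂ → ℝ) (hρ₁pos : ∀ w ∈ Set.range F, 0 < ρ₁ w)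
    (c : ℝ)
    (hF : ∀ w : ℂ, 1 < ‖w‖ → ‖w‖ < R →
      DifferentiableAt ℝ F w ∧ F w ≠ 0 ∧
        ((ρ₁ (F w) : ℂ)) ^ 2 * wirtingerZ F w *
          wirtingerZ (fun ζ => (starRingEnd ℂ) (F ζ)) w = (c : ℂ) / w ^ 2)
    (Ftil : ℂ → ℂ)
    (hFtil : ∀ z : ℂ, 1 / R < ‖z‖ → ‖z‖ < 1 →
      Ftil z = ((starRingEnd ℂ) (F ((starRingEnd ℂ) z)⁻¹))⁻¹)
    (ρtil : ℂ → ℝ) (hρtil : ∀ u ∈ Set.range Ftil, ρtil u = ρ₁ ((starRingEnd ℂ) u)⁻¹) :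
    ∀ z : ℂ, 1 / R < ‖z‖ → ‖z‖ < 1 →
      ((ρtil (Ftil z) : ℂ)) ^ 2 * wirtingerZ Ftil z *
          wirtingerZ (fun ζ => (starRingEnd ℂ) (Ftil ζ)) z =
        (1 / (‖F ((starRingEnd ℂ) z)⁻¹‖ : ℂ) ^ 4) * ((c : ℂ) / z ^ 2) := by
  intro z hz1 hz2
  have hR0 : (0:ℝ) < R := lt_trans one_pos hR
  have hzpos : 0 < ‖z‖ := lt_trans (by positivity) hz1
  have hz0 : z ≠ 0 := by
    intro h; rw [h] at hzpos; simp at hzpos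
  have hσz0 : (starRingEnd ℂ) z ≠ 0 := by simpa using hz0
  have habsw : ‖((starRingEnd ℂ) z)⁻¹‖ = (‖z‖)⁻¹ := by
    simp [map_inv₀]
  have hw1 : 1 < ‖((starRingEnd ℂ) z)⁻¹‖ := by
    rw [habsw]; exact (one_lt_inv₀ hzpos).2 hz2
  have hw2 : ‖((starRingEnd ℂ) z)⁻¹‖ < R := by
    rw [habsw, inv_lt_comm₀ hzpos hR0]
    have := hz1; rw [one_div] at this; exact this
  obtain ⟨hdF, hFw0, heq⟩ := hF _ hw1 hw2
  have hσF0 : (starRingEnd ℂ) (F (((starRingEnd ℂ) z)⁻¹)) ≠ 0 := by simpa using hFw0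
  -- derivative building blocks
  have h1 : HasFDerivAt (fun x : ℂ => (starRingEnd ℂ) x)
      (Complex.conjCLE : ℂ →L[ℝ] ℂ) z := Complex.conjCLE.hasFDerivAt
  have h2 : HasFDerivAt (fun x : ℂ => x⁻¹)
      ((ContinuousLinearMap.smulRight (1 : ℂ →L[ℂ] ℂ)
        (-(((starRingEnd ℂ) z) ^ 2)⁻¹)).restrictScalars ℝ)
      ((starRingEnd ℂ) z) := ((hasDerivAt_inv hσz0).hasFDerivAt).restrictScalars ℝ
  have h3 : HasFDerivAt F (fderiv ℝ F (((starRingEnd ℂ) z)⁻¹)) (((starRingEnd ℂ) z)⁻¹) :=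
    hdF.hasFDerivAt
  have h4 : HasFDerivAt (fun x : ℂ => (starRingEnd ℂ) x)
      (Complex.conjCLE : ℂ →L[ℝ] ℂ) (F (((starRingEnd ℂ) z)⁻¹)) :=
    Complex.conjCLE.hasFDerivAt
  have h5 : HasFDerivAt (fun x : ℂ => x⁻¹)
      ((ContinuousLinearMap.smulRight (1 : ℂ →L[ℂ] ℂ)
        (-(((starRingEnd ℂ) (F (((starRingEnd ℂ) z)⁻¹))) ^ 2)⁻¹)).restrictScalars ℝ)
      ((starRingEnd ℂ) (F (((starRingEnd ℂ) z)⁻¹))) :=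
    ((hasDerivAt_inv hσF0).hasFDerivAt).restrictScalars ℝ
  have htot : HasFDerivAt
      (fun ζ : ℂ => ((starRingEnd ℂ) (F (((starRingEnd ℂ) ζ)⁻¹)))⁻¹)
      (((ContinuousLinearMap.smulRight (1 : ℂ →L[ℂ] ℂ)
          (-(((starRingEnd ℂ) (F (((starRingEnd ℂ) z)⁻¹))) ^ 2)⁻¹)).restrictScalars ℝ).comp
        ((Complex.conjCLE : ℂ →L[ℝ] ℂ).comp
          ((fderiv ℝ F (((starRingEnd ℂ) z)⁻¹)).comp
            (((ContinuousLinearMap.smulRight (1 : ℂ →L[ℂ] ℂ)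
                (-(((starRingEnd ℂ) z) ^ 2)⁻¹)).restrictScalars ℝ).comp
              (Complex.conjCLE : ℂ →L[ℝ] ℂ))))) z :=
    h5.comp z (h4.comp z (h3.comp z (h2.comp z h1)))
  have htot2 : HasFDerivAt
      (fun ζ : ℂ => (starRingEnd ℂ) (((starRingEnd ℂ) (F (((starRingEnd ℂ) ζ)⁻¹)))⁻¹))
      ((Complex.conjCLE : ℂ →L[ℝ] ℂ).comp
        (((ContinuousLinearMap.smulRight (1 : ℂ →L[ℂ] ℂ)
            (-(((starRingEnd ℂ) (F (((starRingEnd ℂ) z)⁻¹))) ^ 2)⁻¹)).restrictScalars ℝ).comp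
          ((Complex.conjCLE : ℂ →L[ℝ] ℂ).comp
            ((fderiv ℝ F (((starRingEnd ℂ) z)⁻¹)).comp
              (((ContinuousLinearMap.smulRight (1 : ℂ →L[ℂ] ℂ)
                  (-(((starRingEnd ℂ) z) ^ 2)⁻¹)).restrictScalars ℝ).comp
                (Complex.conjCLE : ℂ →L[ℝ] ℂ)))))) z :=
    Complex.conjCLE.hasFDerivAt.comp z htot
  -- Ftil agrees with the explicit formula near z
  have hS : IsOpen {x : ℂ | 1 / R < ‖x‖ ∧ ‖x‖ < 1} := by
    have hA := isOpen_lt (continuous_const : Continuous fun _ : ℂ => 1 / R)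
      continuous_norm
    have hB := isOpen_lt continuous_norm (continuous_const : Continuous fun _ : ℂ => (1:ℝ))
    exact hA.inter hB
  have hev : Ftil =ᶠ[nhds z]
      (fun ζ : ℂ => ((starRingEnd ℂ) (F (((starRingEnd ℂ) ζ)⁻¹)))⁻¹) :=
    Filter.eventuallyEq_of_mem (hS.mem_nhds ⟨hz1, hz2⟩) (fun x hx => hFtil x hx.1 hx.2)
  have hev2 : (fun ζ : ℂ => (starRingEnd ℂ) (Ftil ζ)) =ᶠ[nhds z]
      (fun ζ : ℂ => (starRingEnd ℂ) (((starRingEnd ℂ) (F (((starRingEnd ℂ) ζ)⁻¹)))⁻¹)) :=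
    Filter.Eventually.mono hev (fun x hx => congrArg (starRingEnd ℂ) hx)
  have hfd : fderiv ℝ Ftil z =
      fderiv ℝ (fun ζ : ℂ => ((starRingEnd ℂ) (F (((starRingEnd ℂ) ζ)⁻¹)))⁻¹) z :=
    hev.fderiv_eq
  have hfd2 : fderiv ℝ (fun ζ : ℂ => (starRingEnd ℂ) (Ftil ζ)) z =
      fderiv ℝ (fun ζ : ℂ =>
        (starRingEnd ℂ) (((starRingEnd ℂ) (F (((starRingEnd ℂ) ζ)⁻¹)))⁻¹)) z :=
    hev2.fderiv_eq
  -- Wirtinger derivative of Ftil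
  have hW1 : wirtingerZ Ftil z =
      ((-((z : ℂ) ^ 2)⁻¹) *
        ((starRingEnd ℂ) (fderiv ℝ F (((starRingEnd ℂ) z)⁻¹) 1) +
          Complex.I * (starRingEnd ℂ) (fderiv ℝ F (((starRingEnd ℂ) z)⁻¹) Complex.I))) *
        (-(((starRingEnd ℂ) (F (((starRingEnd ℂ) z)⁻¹))) ^ 2)⁻¹) / 2 := by
    simp only [wirtingerZ]
    rw [hfd, htot.fderiv]
    have hk := wz_keyB (fderiv ℝ F (((starRingEnd ℂ) z)⁻¹)) (-(((starRingEnd ℂ) z) ^ 2)⁻¹)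
    simp only [ContinuousLinearMap.comp_apply, ContinuousLinearMap.coe_restrictScalars',
      ContinuousLinearMap.smulRight_apply, ContinuousLinearMap.one_apply,
      ContinuousLinearEquiv.coe_coe, Complex.conjCLE_apply, smul_eq_mul, map_one,
      Complex.conj_I, one_mul, map_neg, map_inv₀, map_pow, map_mul, Complex.conj_conj,
      neg_mul, mul_neg, neg_neg] at hk ⊢
    linear_combination ((-(((starRingEnd ℂ) (F (((starRingEnd ℂ) z)⁻¹))) ^ 2)⁻¹) / 2) * hk
  have hW2 : wirtingerZ (fun ζ => (starRingEnd ℂ) (Ftil ζ)) z =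
      ((-((F (((starRingEnd ℂ) z)⁻¹)) ^ 2)⁻¹) *
        ((-((z : ℂ) ^ 2)⁻¹) *
          (fderiv ℝ F (((starRingEnd ℂ) z)⁻¹) 1 +
            Complex.I * fderiv ℝ F (((starRingEnd ℂ) z)⁻¹) Complex.I))) / 2 := by
    simp only [wirtingerZ]
    rw [hfd2, htot2.fderiv]
    have hk := wz_keyA (fderiv ℝ F (((starRingEnd ℂ) z)⁻¹)) (-(((starRingEnd ℂ) z) ^ 2)⁻¹)
    simp only [ContinuousLinearMap.comp_apply, ContinuousLinearMap.coe_restrictScalars',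
      ContinuousLinearMap.smulRight_apply, ContinuousLinearMap.one_apply,
      ContinuousLinearEquiv.coe_coe, Complex.conjCLE_apply, smul_eq_mul, map_one,
      Complex.conj_I, one_mul, map_neg, map_inv₀, map_pow, map_mul, Complex.conj_conj,
      neg_mul, mul_neg, neg_neg] at hk ⊢
    linear_combination ((-((F (((starRingEnd ℂ) z)⁻¹)) ^ 2)⁻¹) / 2) * hk
  -- hypothesis in explicit form
  have hFbar : HasFDerivAt (fun ζ : ℂ => (starRingEnd ℂ) (F ζ))
      ((Complex.conjCLE : ℂ →L[ℝ] ℂ).comp (fderiv ℝ F (((starRingEnd ℂ) z)⁻¹)))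
      (((starRingEnd ℂ) z)⁻¹) :=
    Complex.conjCLE.hasFDerivAt.comp _ hdF.hasFDerivAt
  have e1 : wirtingerZ F (((starRingEnd ℂ) z)⁻¹) =
      (fderiv ℝ F (((starRingEnd ℂ) z)⁻¹) 1 -
        Complex.I * fderiv ℝ F (((starRingEnd ℂ) z)⁻¹) Complex.I) / 2 := rfl
  have e2 : wirtingerZ (fun ζ => (starRingEnd ℂ) (F ζ)) (((starRingEnd ℂ) z)⁻¹) =
      ((starRingEnd ℂ) (fderiv ℝ F (((starRingEnd ℂ) z)⁻¹) 1) -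
        Complex.I * (starRingEnd ℂ) (fderiv ℝ F (((starRingEnd ℂ) z)⁻¹) Complex.I)) / 2 := by
    simp only [wirtingerZ]
    rw [hFbar.fderiv]
    simp only [ContinuousLinearMap.comp_apply, ContinuousLinearEquiv.coe_coe,
      Complex.conjCLE_apply]
  rw [e1, e2] at heq
  -- conjugate the hypothesis
  have hconj : ((ρ₁ (F (((starRingEnd ℂ) z)⁻¹)) : ℝ) : ℂ) ^ 2 *
      (((starRingEnd ℂ) (fderiv ℝ F (((starRingEnd ℂ) z)⁻¹) 1) +
        Complex.I * (starRingEnd ℂ) (fderiv ℝ F (((starRingEnd ℂ) z)⁻¹) Complex.I)) / 2) *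
      ((fderiv ℝ F (((starRingEnd ℂ) z)⁻¹) 1 +
        Complex.I * fderiv ℝ F (((starRingEnd ℂ) z)⁻¹) Complex.I) / 2) = (c : ℂ) * z ^ 2 := by
    have h := congrArg (starRingEnd ℂ) heq
    simp only [map_mul, map_div₀, map_sub, map_pow, map_inv₀, Complex.conj_I,
      Complex.conj_conj, Complex.conj_ofReal, map_ofNat] at h
    have hz2ne : z ^ 2 ≠ 0 := pow_ne_zero _ hz0
    field_simp at h ⊢
    linear_combination h
  -- weight value
  have hρ : (ρtil (Ftil z) : ℝ) = ρ₁ (F (((starRingEnd ℂ) z)⁻¹)) := by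
    rw [hρtil _ ⟨z, rfl⟩, hFtil z hz1 hz2]
    simp [map_inv₀, Complex.conj_conj, inv_inv]
  -- abbreviations for the final computation
  have hab : F (((starRingEnd ℂ) z)⁻¹) * (starRingEnd ℂ) (F (((starRingEnd ℂ) z)⁻¹)) =
      ((‖F (((starRingEnd ℂ) z)⁻¹)‖ : ℝ) : ℂ) ^ 2 := by
    rw [Complex.mul_conj]; norm_cast; rw [Complex.sq_norm]
  have habne : ((‖F (((starRingEnd ℂ) z)⁻¹)‖ : ℝ) : ℂ) ≠ 0 := by
    simpa [Complex.ofReal_eq_zero] using (norm_ne_zero_iff.mpr hFw0)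
  have key : ((starRingEnd ℂ) (F (((starRingEnd ℂ) z)⁻¹))) ^ 2 *
      (F (((starRingEnd ℂ) z)⁻¹)) ^ 2 =
      ((‖F (((starRingEnd ℂ) z)⁻¹)‖ : ℝ) : ℂ) ^ 4 := by
    rw [show ((starRingEnd ℂ) (F (((starRingEnd ℂ) z)⁻¹))) ^ 2 *
        (F (((starRingEnd ℂ) z)⁻¹)) ^ 2 =
        (F (((starRingEnd ℂ) z)⁻¹) * (starRingEnd ℂ) (F (((starRingEnd ℂ) z)⁻¹))) ^ 2 from by
      ring, hab]
    ring
  have hz2p : (z : ℂ) ^ 2 ≠ 0 := pow_ne_zero _ hz0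
  have expand : 1 / ((‖F (((starRingEnd ℂ) z)⁻¹)‖ : ℝ) : ℂ) ^ 4 * ((c : ℂ) / z ^ 2) =
      (((starRingEnd ℂ) (F (((starRingEnd ℂ) z)⁻¹))) ^ 2 * (F (((starRingEnd ℂ) z)⁻¹)) ^ 2)⁻¹ *
        ((z ^ 2)⁻¹ * (z ^ 2)⁻¹) * ((c : ℂ) * z ^ 2) := by
    rw [← key, mul_assoc,
      show ((z ^ 2)⁻¹ * (z ^ 2)⁻¹) * ((c : ℂ) * z ^ 2) =
        (z ^ 2 * (z ^ 2)⁻¹) * ((z ^ 2)⁻¹ * (c : ℂ)) from by ring,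
      mul_inv_cancel₀ hz2p, one_mul]
    ring
  rw [hρ, hW1, hW2, expand, ← hconj]
  ring
end

section
/- Let 1 < R, 1 < s, let A(1,R) = {w ∈ ℂ : 1 < |w| < R}, and let F : A(1,R) → ℂ and ρ₁ be a positive function on the range of F. Let c ∈ ℝ, and suppose that for every w ∈ A(1,R), F is real-differentiable at w, F(w) ≠ 0, and ρ₁(F(w))²·F_w(w)·(F̄)_w(w) = c/w². For R < |z| < R² define F̃(z) = s²/conj(F(R²/z̄)) and define ρ̃ on the range of F̃ by ρ̃(u) = ρ₁(s²/ū). Then for every z with R < |z| < R², ρ̃(F̃(z))²·F̃_z(z)·(conj F̃)_z(z) = (s⁴/|F(R²/z̄)|⁴)·(c/z²). -/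
lemma clm_apply_eq (D : ℂ →L[ℝ] ℂ) (u : ℂ) :
    D u = ((D 1 - Complex.I * D Complex.I) / 2) * u
        + ((D 1 + Complex.I * D Complex.I) / 2) * (starRingEnd ℂ) u := by
  have hu : D u = (u.re : ℂ) * D 1 + (u.im : ℂ) * D Complex.I := by
    conv_lhs => rw [← Complex.re_add_im u]
    have h : ((u.re : ℂ) + (u.im : ℂ) * Complex.I)
        = (u.re : ℝ) • (1 : ℂ) + (u.im : ℝ) • Complex.I := by
      simp [Complex.real_smul]
    rw [h, map_add, map_smul, map_smul]
    simp [Complex.real_smul]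
  have hc : (starRingEnd ℂ) u = (u.re : ℂ) - (u.im : ℂ) * Complex.I := by
    apply Complex.ext <;> simp
  have hu2 : u = (u.re : ℂ) + (u.im : ℂ) * Complex.I := (Complex.re_add_im u).symm
  linear_combination hu - ((D 1 - Complex.I * D Complex.I) / 2) * hu2
    - ((D 1 + Complex.I * D Complex.I) / 2) * hc
    + ((u.im : ℂ) * D Complex.I) * Complex.I_sq

lemma fderiv_conj_comp (f : ℂ → ℂ) (z : ℂ) (hf : DifferentiableAt ℝ f z) (v : ℂ) :
    (fderiv ℝ (fun ζ => (starRingEnd ℂ) (f ζ)) z) v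
      = (starRingEnd ℂ) ((fderiv ℝ f z) v) := by
  have h := (Complex.conjCLE.toContinuousLinearMap.hasFDerivAt.comp z hf.hasFDerivAt)
  have h' : HasFDerivAt (fun ζ => (starRingEnd ℂ) (f ζ))
      ((Complex.conjCLE.toContinuousLinearMap).comp (fderiv ℝ f z)) z := h
  rw [h'.fderiv]
  simp

lemma wirtingerZ_conj (f : ℂ → ℂ) (z : ℂ) (hf : DifferentiableAt ℝ f z) :
    wirtingerZ (fun ζ => (starRingEnd ℂ) (f ζ)) z
      = (starRingEnd ℂ) (((fderiv ℝ f z) 1 + Complex.I * (fderiv ℝ f z) Complex.I) / 2) := by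
  unfold wirtingerZ
  rw [fderiv_conj_comp f z hf 1, fderiv_conj_comp f z hf Complex.I]
  simp only [map_div₀, map_add, map_mul, Complex.conj_I, map_ofNat]
  ring

/-- Hopf-product identity for the outer reflection. If on the annulus
`A(1,R)` the map `F` satisfies `ρ₁(F(w))²·F_w(w)·(F̄)_w(w) = c/w²` with `c ∈ ℝ`,
`F` real-differentiable and nonvanishing, then the reflected map
`F̃(z) = s²/conj(F(R²/z̄))` with the reflected weight `ρ̃(u) = ρ₁(s²/ū)` satisfies
`ρ̃(F̃(z))²·F̃_z(z)·(conj F̃)_z(z) = (s⁴/|F(R²/z̄)|⁴)·(c/z²)` for `R < |z| < R²`. -/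
theorem stmt_7 (R s : ℝ) (hR : 1 < R) (hs : 1 < s)
    (F : ℂ → ℂ) (ρ₁ : ℂ → ℝ) (hρ₁pos : ∀ w ∈ Set.range F, 0 < ρ₁ w)
    (c : ℝ)
    (hF : ∀ w : ℂ, 1 < ‖w‖ → ‖w‖ < R →
      DifferentiableAt ℝ F w ∧ F w ≠ 0 ∧
        ((ρ₁ (F w) : ℂ)) ^ 2 * wirtingerZ F w *
          wirtingerZ (fun ζ => (starRingEnd ℂ) (F ζ)) w = (c : ℂ) / w ^ 2)
    (Ftil : ℂ → ℂ)
    (hFtil : ∀ z : ℂ, R < ‖z‖ → ‖z‖ < R ^ 2 →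
      Ftil z = (s : ℂ) ^ 2 / (starRingEnd ℂ) (F ((R : ℂ) ^ 2 / (starRingEnd ℂ) z)))
    (ρtil : ℂ → ℝ)
    (hρtil : ∀ u ∈ Set.range Ftil, ρtil u = ρ₁ ((s : ℂ) ^ 2 / (starRingEnd ℂ) u)) :
    ∀ z : ℂ, R < ‖z‖ → ‖z‖ < R ^ 2 →
      ((ρtil (Ftil z) : ℂ)) ^ 2 * wirtingerZ Ftil z *
          wirtingerZ (fun ζ => (starRingEnd ℂ) (Ftil ζ)) z =
        ((s : ℂ) ^ 4 / (‖F ((R : ℂ) ^ 2 / (starRingEnd ℂ) z)‖ : ℂ) ^ 4) *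
          ((c : ℂ) / z ^ 2) := by
  intro z hz1 hz2
  have hR0 : (0:ℝ) < R := lt_trans one_pos hR
  have hs0 : (s:ℂ) ≠ 0 := by
    simp only [ne_eq, Complex.ofReal_eq_zero]; linarith
  have hzabs : 0 < ‖z‖ := lt_trans (lt_trans one_pos hR) hz1
  have hz0 : z ≠ 0 := by
    intro h; rw [h] at hzabs; simp at hzabs
  have hcz0 : (starRingEnd ℂ) z ≠ 0 := by simpa using hz0
  obtain ⟨w, hw⟩ : ∃ w : ℂ, w = (R:ℂ)^2 * ((starRingEnd ℂ) z)⁻¹ := ⟨_, rfl⟩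
  have hwdiv : (R : ℂ) ^ 2 / (starRingEnd ℂ) z = w := by rw [hw, div_eq_mul_inv]
  have habsw : ‖w‖ = R^2 / ‖z‖ := by
    rw [hw, ← div_eq_mul_inv]
    simp [norm_div, Complex.norm_conj, abs_of_pos hR0]
  have hw1 : 1 < ‖w‖ := by
    rw [habsw, lt_div_iff₀ hzabs]; linarith
  have hw2 : ‖w‖ < R := by
    rw [habsw, div_lt_iff₀ hzabs]; nlinarith
  obtain ⟨hFd, hFne, hHopf⟩ := hF w hw1 hw2
  have hcFne : (starRingEnd ℂ) (F w) ≠ 0 := by simpa using hFne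
  have hρpos : 0 < ρ₁ (F w) := hρ₁pos _ ⟨w, rfl⟩
  have hρne : ((ρ₁ (F w) : ℝ) : ℂ) ≠ 0 := by
    simp only [ne_eq, Complex.ofReal_eq_zero]; exact hρpos.ne'
  -- abbreviations
  set D : ℂ →L[ℝ] ℂ := fderiv ℝ F w with hD
  set Fz : ℂ := (D 1 - Complex.I * D Complex.I) / 2 with hFz
  set Fzb : ℂ := (D 1 + Complex.I * D Complex.I) / 2 with hFzb
  set d₁ : ℂ := (R:ℂ)^2 * -(((starRingEnd ℂ) z)^2)⁻¹ with hd₁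
  set d₂ : ℂ := (s:ℂ)^2 * -(((starRingEnd ℂ) (F w))^2)⁻¹ with hd₂
  -- the explicit reflected map
  set E : ℂ → ℂ := fun ζ : ℂ =>
    (s:ℂ)^2 * ((starRingEnd ℂ) (F ((R:ℂ)^2 * ((starRingEnd ℂ) ζ)⁻¹)))⁻¹ with hE
  -- eventual equality Ftil = E near z
  have hopen : IsOpen {ζ : ℂ | R < ‖ζ‖ ∧ ‖ζ‖ < R^2} :=
    (isOpen_lt continuous_const continuous_norm).inter
      (isOpen_lt continuous_norm continuous_const)
  have hev : Ftil =ᶠ[nhds z] E := by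
    filter_upwards [hopen.mem_nhds ⟨hz1, hz2⟩] with ζ hζ
    rw [hFtil ζ hζ.1 hζ.2, hE]
    rw [div_eq_mul_inv, div_eq_mul_inv]
  -- derivative of E
  have hconj : HasFDerivAt (fun ζ : ℂ => (starRingEnd ℂ) ζ)
      (Complex.conjCLE.toContinuousLinearMap) z :=
    Complex.conjCLE.toContinuousLinearMap.hasFDerivAt
  have hinv1 : HasDerivAt (fun u : ℂ => (R:ℂ)^2 * u⁻¹)
      ((R:ℂ)^2 * (-(((starRingEnd ℂ) z)^2)⁻¹)) ((starRingEnd ℂ) z) :=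
    (hasDerivAt_inv hcz0).const_mul ((R:ℂ)^2)
  have h2 := (hinv1.hasFDerivAt.restrictScalars ℝ).comp z hconj
  have hFd' : HasFDerivAt F D ((R:ℂ)^2 * ((starRingEnd ℂ) z)⁻¹) := hw ▸ hFd.hasFDerivAt
  have h3 := hFd'.comp z h2
  have h4 := (Complex.conjCLE.toContinuousLinearMap.hasFDerivAt
      (x := F ((R:ℂ)^2 * ((starRingEnd ℂ) z)⁻¹))).comp z h3
  have hinv2 : HasDerivAt (fun u : ℂ => (s:ℂ)^2 * u⁻¹)
      ((s:ℂ)^2 * (-(((starRingEnd ℂ) (F w))^2)⁻¹)) ((starRingEnd ℂ) (F w)) :=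
    (hasDerivAt_inv hcFne).const_mul ((s:ℂ)^2)
  have hinv2' : HasFDerivAt (fun u : ℂ => (s:ℂ)^2 * u⁻¹)
      (ContinuousLinearMap.restrictScalars ℝ
        (ContinuousLinearMap.smulRight (1 : ℂ →L[ℂ] ℂ) d₂))
      ((starRingEnd ℂ) (F ((R:ℂ)^2 * ((starRingEnd ℂ) z)⁻¹))) := by
    rw [← hw]; exact hinv2.hasFDerivAt.restrictScalars ℝ
  have hEd := hinv2'.comp z h4
  set Ltot := (ContinuousLinearMap.restrictScalars ℝ
      (ContinuousLinearMap.smulRight (1 : ℂ →L[ℂ] ℂ) d₂)).comp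
      ((Complex.conjCLE.toContinuousLinearMap).comp
        (D.comp
          ((ContinuousLinearMap.restrictScalars ℝ
              (ContinuousLinearMap.smulRight (1 : ℂ →L[ℂ] ℂ)
                ((R:ℂ)^2 * -(((starRingEnd ℂ) z)^2)⁻¹))).comp
            (Complex.conjCLE.toContinuousLinearMap)))) with hLtot
  have hEderiv : HasFDerivAt E Ltot z := hEd
  -- evaluate Ltot
  have hL : ∀ v : ℂ, Ltot v
      = (starRingEnd ℂ) (Fz * ((starRingEnd ℂ) v * d₁)
          + Fzb * (starRingEnd ℂ) ((starRingEnd ℂ) v * d₁)) * d₂ := by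
    intro v
    rw [hLtot]
    simp only [ContinuousLinearMap.coe_comp', Function.comp_apply,
      ContinuousLinearMap.coe_restrictScalars', ContinuousLinearMap.smulRight_apply,
      ContinuousLinearMap.one_apply, smul_eq_mul, one_mul,
      ContinuousLinearEquiv.coe_coe, Complex.conjCLE_apply]
    rw [clm_apply_eq D ((starRingEnd ℂ) v * d₁)]
  -- fderiv identities
  have hfderivFtil : fderiv ℝ Ftil z = Ltot := by
    rw [hev.fderiv_eq, hEderiv.fderiv]
  have hfderivE : fderiv ℝ E z = Ltot := hEderiv.fderiv
  -- wirtingerZ of Ftil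
  have hWz : wirtingerZ Ftil z = (starRingEnd ℂ) Fz * (starRingEnd ℂ) d₁ * d₂ := by
    unfold wirtingerZ
    rw [hfderivFtil, hL 1, hL Complex.I]
    simp only [map_one, one_mul, map_add, map_mul, Complex.conj_conj, Complex.conj_I,
      map_neg]
    linear_combination (d₂/2 * ((starRingEnd ℂ) Fzb * d₁
      - (starRingEnd ℂ) Fz * (starRingEnd ℂ) d₁)) * Complex.I_sq
  -- wirtingerZ of conj ∘ Ftil
  have hevc : (fun ζ => (starRingEnd ℂ) (Ftil ζ)) =ᶠ[nhds z]
      (fun ζ => (starRingEnd ℂ) (E ζ)) := by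
    filter_upwards [hev] with ζ hζ
    rw [hζ]
  have hWzc : wirtingerZ (fun ζ => (starRingEnd ℂ) (Ftil ζ)) z
      = Fzb * (starRingEnd ℂ) d₁ * (starRingEnd ℂ) d₂ := by
    unfold wirtingerZ
    rw [hevc.fderiv_eq]
    rw [fderiv_conj_comp E z hEderiv.differentiableAt 1,
        fderiv_conj_comp E z hEderiv.differentiableAt Complex.I]
    rw [hfderivE, hL 1, hL Complex.I]
    simp only [map_one, one_mul, map_add, map_mul, Complex.conj_conj, Complex.conj_I,
      map_neg]
    linear_combination ((starRingEnd ℂ) d₂/2 * (Fz * d₁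
      - Fzb * (starRingEnd ℂ) d₁)) * Complex.I_sq
  -- weight identity
  have hρeq : ρtil (Ftil z) = ρ₁ (F w) := by
    rw [hρtil _ ⟨z, rfl⟩]
    congr 1
    rw [hFtil z hz1 hz2, hwdiv]
    rw [map_div₀, Complex.conj_conj, map_pow, Complex.conj_ofReal]
    field_simp
  -- Hopf hypothesis in Fz/Fzb form
  have hWF : wirtingerZ F w = Fz := rfl
  have hWFc : wirtingerZ (fun ζ => (starRingEnd ℂ) (F ζ)) w = (starRingEnd ℂ) Fzb := by
    rw [wirtingerZ_conj F w hFd, hFzb]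
  rw [hWF, hWFc] at hHopf
  have hkey := congrArg (starRingEnd ℂ) hHopf
  simp only [map_mul, map_div₀, map_pow, Complex.conj_conj, Complex.conj_ofReal] at hkey
  -- hkey : (ρ:ℂ)^2 * conj Fz * Fzb = c / (conj w)^2
  have hcd₁ : (starRingEnd ℂ) d₁ = (R:ℂ)^2 * -((z:ℂ)^2)⁻¹ := by
    rw [hd₁]
    simp [map_mul, map_neg, map_inv₀, map_pow, Complex.conj_conj, Complex.conj_ofReal]
  have hcd₂ : (starRingEnd ℂ) d₂ = (s:ℂ)^2 * -((F w)^2)⁻¹ := by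
    rw [hd₂]
    simp [map_mul, map_neg, map_inv₀, map_pow, Complex.conj_conj, Complex.conj_ofReal]
  have hcw : (starRingEnd ℂ) w = (R:ℂ)^2 * z⁻¹ := by
    rw [hw]
    simp [map_mul, map_inv₀, map_pow, Complex.conj_conj, Complex.conj_ofReal]
  have habs4 : ((‖F w‖ : ℝ) : ℂ)^4 = ((F w) * (starRingEnd ℂ) (F w))^2 := by
    calc ((‖F w‖ : ℝ) : ℂ)^4
        = (((‖F w‖)^2 : ℝ) : ℂ)^2 := by push_cast; ring
      _ = ((Complex.normSq (F w) : ℝ) : ℂ)^2 := by rw [Complex.sq_norm]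
      _ = ((F w) * (starRingEnd ℂ) (F w))^2 := by rw [Complex.mul_conj]
  rw [hwdiv, hWz, hWzc, hρeq]
  calc ((ρ₁ (F w) : ℝ) : ℂ)^2 * ((starRingEnd ℂ) Fz * (starRingEnd ℂ) d₁ * d₂)
        * (Fzb * (starRingEnd ℂ) d₁ * (starRingEnd ℂ) d₂)
      = (((starRingEnd ℂ) d₁)^2 * d₂ * (starRingEnd ℂ) d₂)
        * (((ρ₁ (F w) : ℝ) : ℂ)^2 * (starRingEnd ℂ) Fz * Fzb) := by ring
    _ = (((starRingEnd ℂ) d₁)^2 * d₂ * (starRingEnd ℂ) d₂)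
        * ((c : ℂ) / ((starRingEnd ℂ) w)^2) := by rw [hkey]
    _ = ((s : ℂ) ^ 4 / ((‖F w‖ : ℝ) : ℂ) ^ 4) * ((c : ℂ) / z ^ 2) := by
        have hRc : (R:ℂ) ≠ 0 := by
          simp only [ne_eq, Complex.ofReal_eq_zero]; exact hR0.ne'
        rw [hcd₁, hcd₂, hcw, hd₂, habs4]
        field_simp
end

section
/- Let Y, A₂ ⊆ ℂ be open, let b : A₂ → Y be holomorphic with b'(w) ≠ 0 for all w ∈ A₂, and let ρ : Y → ℝ be positive and continuously differentiable. Define ρ₁ : A₂ → ℝ by ρ₁(w) = ρ(b(w))·|b'(w)|. Let A₁ ⊆ ℂ be open and let f : A₁ → A₂ be twice continuously differentiable (in the real sense). Then f is ρ₁-harmonic on A₁ if and only if b ∘ f is ρ-harmonic on A₁. -/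
/-- Wirtinger derivative `f_{z̄}` of a map `f : ℂ → ℂ`, computed from the real
Fréchet derivative `L = Df(z)` as `(L(1) + i·L(i))/2`. -/
noncomputable def wirtingerZbar (f : ℂ → ℂ) (z : ℂ) : ℂ :=
  ((fderiv ℝ f z) 1 + Complex.I * (fderiv ℝ f z) Complex.I) / 2

/-- A map `f` is `ρ`-harmonic on `V` if it satisfies the Euler–Lagrange equation
`f_{z z̄} + 2·((∂_w ρ)(f(z))/ρ(f(z)))·f_z·f_{z̄} = 0` on `V`, where
`∂_w ρ` is the Wirtinger derivative of `ρ` regarded as a map `ℂ → ℂ`. -/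
def IsRhoHarmonicOn (ρ : ℂ → ℝ) (f : ℂ → ℂ) (V : Set ℂ) : Prop :=
  ∀ z ∈ V,
    wirtingerZbar (fun w => wirtingerZ f w) z +
        2 * (wirtingerZ (fun w => ((ρ w : ℝ) : ℂ)) (f z) / ((ρ (f z) : ℝ) : ℂ)) *
          wirtingerZ f z * wirtingerZbar f z = 0

open Complex

private lemma aux_alg (a c x y : ℂ) :
    x*a + y*c = ((a - I*c)/2)*(x + y*I) + ((a + I*c)/2)*(x - y*I) := by
  linear_combination (y*c) * Complex.I_sq

private lemma conj_eq' (v : ℂ) : (starRingEnd ℂ) v = (v.re : ℂ) - (v.im : ℂ) * I := by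
  apply Complex.ext <;> simp

private lemma clm_decomp (L : ℂ →L[ℝ] ℂ) (v : ℂ) :
    L v = ((L 1 - I * L I)/2) * v + ((L 1 + I * L I)/2) * ((starRingEnd ℂ) v) := by
  have e3 : L v = (v.re:ℂ) * L 1 + (v.im:ℂ) * L I := by
    have h : v = v.re • (1:ℂ) + v.im • I := by
      rw [real_smul, real_smul, mul_one, re_add_im]
    nth_rewrite 1 [h]
    rw [map_add, map_smul, map_smul]
    simp [real_smul]
  calc L v = (v.re:ℂ) * L 1 + (v.im:ℂ) * L I := e3
    _ = ((L 1 - I*L I)/2)*((v.re:ℂ) + (v.im:ℂ)*I) + ((L 1 + I*L I)/2)*((v.re:ℂ) - (v.im:ℂ)*I) :=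
        aux_alg _ _ _ _
    _ = _ := by rw [← conj_eq', re_add_im]

private lemma wirtingerZ_hasFDeriv {f : ℂ → ℂ} {L : ℂ →L[ℝ] ℂ} {z : ℂ} (h : HasFDerivAt f L z) :
    wirtingerZ f z = (L 1 - I * L I)/2 := by rw [wirtingerZ, h.fderiv]

private lemma wirtingerZbar_hasFDeriv {f : ℂ → ℂ} {L : ℂ →L[ℝ] ℂ} {z : ℂ}
    (h : HasFDerivAt f L z) :
    wirtingerZbar f z = (L 1 + I * L I)/2 := by rw [wirtingerZbar, h.fderiv]

private lemma wirtingerZ_congr {f g : ℂ → ℂ} {z : ℂ} (h : f =ᶠ[nhds z] g) :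
    wirtingerZ f z = wirtingerZ g z := by unfold wirtingerZ; rw [h.fderiv_eq]

private lemma wirtingerZbar_congr {f g : ℂ → ℂ} {z : ℂ} (h : f =ᶠ[nhds z] g) :
    wirtingerZbar f z = wirtingerZbar g z := by unfold wirtingerZbar; rw [h.fderiv_eq]

private lemma wirtinger_comp_left {b g : ℂ → ℂ} {b' : ℂ} {z : ℂ}
    (hb : HasDerivAt b b' (g z)) (hg : DifferentiableAt ℝ g z) :
    wirtingerZ (fun w => b (g w)) z = b' * wirtingerZ g z ∧
    wirtingerZbar (fun w => b (g w)) z = b' * wirtingerZbar g z := by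
  have hG := hg.hasFDerivAt
  have hL : HasFDerivAt (fun w => b (g w))
      (((ContinuousLinearMap.smulRight (1 : ℂ →L[ℂ] ℂ) b').restrictScalars ℝ).comp
        (fderiv ℝ g z)) z := (hb.hasFDerivAt.restrictScalars ℝ).comp z hG
  constructor
  · rw [wirtingerZ_hasFDeriv hL, wirtingerZ]
    simp only [ContinuousLinearMap.comp_apply, ContinuousLinearMap.coe_restrictScalars',
      ContinuousLinearMap.smulRight_apply, ContinuousLinearMap.one_apply, smul_eq_mul]
    ring
  · rw [wirtingerZbar_hasFDeriv hL, wirtingerZbar]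
    simp only [ContinuousLinearMap.comp_apply, ContinuousLinearMap.coe_restrictScalars',
      ContinuousLinearMap.smulRight_apply, ContinuousLinearMap.one_apply, smul_eq_mul]
    ring

private lemma wirtinger_comp_right {g h : ℂ → ℂ} {h' : ℂ} {z : ℂ}
    (hh : HasDerivAt h h' z) (hg : DifferentiableAt ℝ g (h z)) :
    wirtingerZ (fun w => g (h w)) z = wirtingerZ g (h z) * h' ∧
    wirtingerZbar (fun w => g (h w)) z = wirtingerZbar g (h z) * (starRingEnd ℂ) h' := by
  have hL : HasFDerivAt (fun w => g (h w))
      ((fderiv ℝ g (h z)).comp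
        ((ContinuousLinearMap.smulRight (1 : ℂ →L[ℂ] ℂ) h').restrictScalars ℝ)) z :=
    hg.hasFDerivAt.comp z (hh.hasFDerivAt.restrictScalars ℝ)
  set M := fderiv ℝ g (h z) with hM
  have e1 : M h' = ((M 1 - I * M I)/2) * h' + ((M 1 + I * M I)/2) * ((starRingEnd ℂ) h') :=
    clm_decomp M h'
  have e2 : M (I * h') = ((M 1 - I * M I)/2) * (I * h')
      + ((M 1 + I * M I)/2) * ((starRingEnd ℂ) (I * h')) := clm_decomp M (I * h')
  have e3 : (starRingEnd ℂ) (I * h') = -I * (starRingEnd ℂ) h' := by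
    rw [map_mul, Complex.conj_I]
  constructor
  · rw [wirtingerZ_hasFDeriv hL, wirtingerZ, hM]
    simp only [ContinuousLinearMap.comp_apply, ContinuousLinearMap.coe_restrictScalars',
      ContinuousLinearMap.smulRight_apply, ContinuousLinearMap.one_apply, smul_eq_mul, one_mul]
    rw [e1, e2, e3]
    linear_combination (((M 1 + I * M I)/2) * ((starRingEnd ℂ) h')/2
      - ((M 1 - I * M I)/2) * h'/2) * Complex.I_sq
  · rw [wirtingerZbar_hasFDeriv hL, wirtingerZbar, hM]
    simp only [ContinuousLinearMap.comp_apply, ContinuousLinearMap.coe_restrictScalars',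
      ContinuousLinearMap.smulRight_apply, ContinuousLinearMap.one_apply, smul_eq_mul, one_mul]
    rw [e1, e2, e3]
    linear_combination (((M 1 - I * M I)/2) * h'/2
      - ((M 1 + I * M I)/2) * ((starRingEnd ℂ) h')/2) * Complex.I_sq

private lemma wirtinger_mul {u v : ℂ → ℂ} {z : ℂ}
    (hu : DifferentiableAt ℝ u z) (hv : DifferentiableAt ℝ v z) :
    wirtingerZ (fun w => u w * v w) z = u z * wirtingerZ v z + wirtingerZ u z * v z ∧
    wirtingerZbar (fun w => u w * v w) z = u z * wirtingerZbar v z + wirtingerZbar u z * v z := by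
  have h := fderiv_fun_mul (𝕜 := ℝ) hu hv
  constructor
  · rw [wirtingerZ, h, wirtingerZ, wirtingerZ]
    simp only [ContinuousLinearMap.add_apply, ContinuousLinearMap.smul_apply,
      ContinuousLinearMap.smulRight_apply, smul_eq_mul]
    ring
  · rw [wirtingerZbar, h, wirtingerZbar, wirtingerZbar]
    simp only [ContinuousLinearMap.add_apply, ContinuousLinearMap.smul_apply,
      ContinuousLinearMap.smulRight_apply, smul_eq_mul]
    ring

private lemma wirtinger_cabs {a : ℂ} (ha : a ≠ 0) :
    DifferentiableAt ℝ (fun z : ℂ => ((‖z‖ : ℝ) : ℂ)) a ∧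
    wirtingerZ (fun z : ℂ => ((‖z‖ : ℝ) : ℂ)) a
      = (starRingEnd ℂ) a / (2 * (‖a‖ : ℂ)) := by
  have hre1 : HasFDerivAt (fun z : ℂ => z.re) Complex.reCLM a := Complex.reCLM.hasFDerivAt
  have him1 : HasFDerivAt (fun z : ℂ => z.im) Complex.imCLM a := Complex.imCLM.hasFDerivAt
  have hns : HasFDerivAt (fun z : ℂ => Complex.normSq z)
      ((a.re • Complex.reCLM + a.re • Complex.reCLM)
        + (a.im • Complex.imCLM + a.im • Complex.imCLM)) a := by
    have hfun : (fun z : ℂ => Complex.normSq z) = fun z : ℂ => z.re * z.re + z.im * z.im :=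
      funext fun z => Complex.normSq_apply z
    rw [hfun]
    exact (hre1.mul hre1).add (him1.mul him1)
  have hnsne : Complex.normSq a ≠ 0 := ne_of_gt (Complex.normSq_pos.2 ha)
  have hsq : HasDerivAt Real.sqrt (1/(2*Real.sqrt (Complex.normSq a))) (Complex.normSq a) :=
    Real.hasDerivAt_sqrt hnsne
  have hcomp := hsq.comp_hasFDerivAt a hns
  have hfin := Complex.ofRealCLM.hasFDerivAt.comp a hcomp
  have hfun2 : (fun z : ℂ => ((‖z‖ : ℝ) : ℂ))
      = ⇑Complex.ofRealCLM ∘ (Real.sqrt ∘ fun z : ℂ => Complex.normSq z) :=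
    funext fun z => by simp [Complex.norm_def]
  rw [hfun2]
  refine ⟨hfin.differentiableAt, ?_⟩
  rw [wirtingerZ_hasFDeriv hfin]
  have hs : Real.sqrt (Complex.normSq a) = ‖a‖ := by rw [Complex.norm_def]
  have hsne : (‖a‖ : ℝ) ≠ 0 := by
    simpa using norm_ne_zero_iff.2 ha
  have hc : (starRingEnd ℂ) a = (a.re : ℂ) - (a.im : ℂ) * I := by
    apply Complex.ext <;> simp
  simp only [ContinuousLinearMap.comp_apply, ContinuousLinearMap.coe_smul',
    Pi.smul_apply, ContinuousLinearMap.add_apply, ContinuousLinearMap.smul_apply,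
    ContinuousLinearMap.smulRight_apply, Complex.reCLM_apply, Complex.imCLM_apply,
    Complex.ofRealCLM_apply, Complex.one_re, Complex.one_im, Complex.I_re, Complex.I_im,
    smul_eq_mul, hs, hc]
  push_cast
  field_simp
  ring

/-- Lemma 3.4(f): for a holomorphic `b : A₂ → Y` with nonvanishing
derivative, positive `C¹` weight `ρ` on `Y`, and the induced weight
`ρ₁(w) = ρ(b(w))·|b'(w)|` on `A₂`, a `C²` map `f : A₁ → A₂` is `ρ₁`-harmonic on
`A₁` if and only if `b ∘ f` is `ρ`-harmonic on `A₁`. -/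
theorem stmt_15 (Y A₂ A₁ : Set ℂ) (hY : IsOpen Y) (hA₂ : IsOpen A₂) (hA₁ : IsOpen A₁)
    (b : ℂ → ℂ) (hb : DifferentiableOn ℂ b A₂) (hbmaps : Set.MapsTo b A₂ Y)
    (hb' : ∀ w ∈ A₂, deriv b w ≠ 0)
    (ρ : ℂ → ℝ) (hρpos : ∀ w ∈ Y, 0 < ρ w) (hρ : ContDiffOn ℝ 1 ρ Y)
    (ρ₁ : ℂ → ℝ) (hρ₁ : ∀ w ∈ A₂, ρ₁ w = ρ (b w) * ‖deriv b w‖)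
    (f : ℂ → ℂ) (hf : ContDiffOn ℝ 2 f A₁) (hfmaps : Set.MapsTo f A₁ A₂) :
    IsRhoHarmonicOn ρ₁ f A₁ ↔ IsRhoHarmonicOn ρ (b ∘ f) A₁ := by
  have hban : AnalyticOnNhd ℂ b A₂ := hb.analyticOnNhd hA₂
  have hb'an : AnalyticOnNhd ℂ (deriv b) A₂ := hban.deriv
  have hfd : ∀ w ∈ A₁, DifferentiableAt ℝ f w := fun w hw =>
    (hf.differentiableOn two_ne_zero).differentiableAt (hA₁.mem_nhds hw)
  have hbd : ∀ w ∈ A₂, HasDerivAt b (deriv b w) w := fun w hw =>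
    (hb.differentiableAt (hA₂.mem_nhds hw)).hasDerivAt
  have hb2d : ∀ w ∈ A₂, HasDerivAt (deriv b) (deriv (deriv b) w) w := fun w hw =>
    (hb'an w hw).differentiableAt.hasDerivAt
  have hWf : ∀ z ∈ A₁, DifferentiableAt ℝ (fun w => wirtingerZ f w) z := by
    have h2 : ContDiffOn ℝ (1+1) f A₁ := by norm_num; exact hf
    have hD : DifferentiableOn ℝ (fderiv ℝ f) A₁ :=
      (((contDiffOn_succ_iff_fderiv_of_isOpen hA₁).1 h2).2.2).differentiableOn one_ne_zero
    intro z hz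
    have hDz : DifferentiableAt ℝ (fderiv ℝ f) z := hD.differentiableAt (hA₁.mem_nhds hz)
    have h1 : DifferentiableAt ℝ (fun w => (fderiv ℝ f w) 1) z :=
      (ContinuousLinearMap.apply ℝ ℂ (1:ℂ)).differentiableAt.comp z hDz
    have hI : DifferentiableAt ℝ (fun w => (fderiv ℝ f w) I) z :=
      (ContinuousLinearMap.apply ℝ ℂ I).differentiableAt.comp z hDz
    show DifferentiableAt ℝ
      (fun w => ((fderiv ℝ f w) 1 - Complex.I * (fderiv ℝ f w) Complex.I)/2) z
    simp only [div_eq_mul_inv]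
    exact (h1.sub (hI.const_mul I)).mul_const ((2:ℂ)⁻¹)
  have key : ∀ z ∈ A₁,
      wirtingerZbar (fun w => wirtingerZ (b ∘ f) w) z +
        2 * (wirtingerZ (fun w => ((ρ w : ℝ) : ℂ)) ((b ∘ f) z) / ((ρ ((b ∘ f) z) : ℝ) : ℂ)) *
          wirtingerZ (b ∘ f) z * wirtingerZbar (b ∘ f) z
      = deriv b (f z) *
        (wirtingerZbar (fun w => wirtingerZ f w) z +
          2 * (wirtingerZ (fun w => ((ρ₁ w : ℝ) : ℂ)) (f z) / ((ρ₁ (f z) : ℝ) : ℂ)) *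
            wirtingerZ f z * wirtingerZbar f z) := by
    intro z hz
    have hfz : f z ∈ A₂ := hfmaps hz
    have hy : b (f z) ∈ Y := hbmaps hfz
    simp only [Function.comp_def, Function.comp_apply]
    set B := deriv b (f z) with hB
    set B2 := deriv (deriv b) (f z) with hB2def
    have hBne : B ≠ 0 := hb' _ hfz
    have hcompZ : ∀ w ∈ A₁, wirtingerZ (fun x => b (f x)) w = deriv b (f w) * wirtingerZ f w :=
      fun w hw => (wirtinger_comp_left (hbd _ (hfmaps hw)) (hfd w hw)).1
    have hcompZbar : wirtingerZbar (fun x => b (f x)) z = B * wirtingerZbar f z :=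
      (wirtinger_comp_left (hbd _ hfz) (hfd z hz)).2
    have hdbf : DifferentiableAt ℝ (fun w => deriv b (f w)) z :=
      ((hb'an _ hfz).differentiableAt.restrictScalars ℝ).comp z (hfd z hz)
    have hA : wirtingerZbar (fun w => wirtingerZ (fun x => b (f x)) w) z
        = B * wirtingerZbar (fun w => wirtingerZ f w) z
          + B2 * wirtingerZbar f z * wirtingerZ f z := by
      have hev : (fun w => wirtingerZ (fun x => b (f x)) w)
          =ᶠ[nhds z] (fun w => deriv b (f w) * wirtingerZ f w) := by
        filter_upwards [hA₁.mem_nhds hz] with w hw using hcompZ w hw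
      rw [wirtingerZbar_congr hev]
      rw [(wirtinger_mul (u := fun w => deriv b (f w)) (v := fun w => wirtingerZ f w)
        hdbf (hWf z hz)).2]
      have h2 : wirtingerZbar (fun w => deriv b (f w)) z = B2 * wirtingerZbar f z :=
        (wirtinger_comp_left (hb2d _ hfz) (hfd z hz)).2
      rw [h2]
    have hρd : DifferentiableAt ℝ (fun y => ((ρ y : ℝ) : ℂ)) (b (f z)) :=
      Complex.ofRealCLM.differentiableAt.comp (b (f z))
        ((hρ.differentiableOn one_ne_zero).differentiableAt (hY.mem_nhds hy))
    have habs := wirtinger_cabs hBne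
    have hRne : ((ρ (b (f z)) : ℝ) : ℂ) ≠ 0 := by
      exact_mod_cast (hρpos _ hy).ne'
    have haBne : ((‖B‖ : ℝ) : ℂ) ≠ 0 := by
      exact_mod_cast norm_ne_zero_iff.2 hBne
    have hconj : (starRingEnd ℂ) B = ((‖B‖ : ℝ) : ℂ)^2 / B := by
      rw [eq_div_iff hBne]
      rw [← Complex.normSq_eq_conj_mul_self]
      rw [← Complex.sq_norm]
      push_cast
      ring
    have hWρ₁ : wirtingerZ (fun w => ((ρ₁ w : ℝ) : ℂ)) (f z)
        = ((ρ (b (f z)) : ℝ) : ℂ) * ((starRingEnd ℂ) B / (2 * ((‖B‖ : ℝ) : ℂ)) * B2)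
          + wirtingerZ (fun w => ((ρ w : ℝ) : ℂ)) (b (f z)) * B * ((‖B‖ : ℝ) : ℂ) := by
      have hev : (fun w => ((ρ₁ w : ℝ) : ℂ)) =ᶠ[nhds (f z)]
          (fun w => ((ρ (b w) : ℝ) : ℂ) * ((‖deriv b w‖ : ℝ) : ℂ)) := by
        filter_upwards [hA₂.mem_nhds hfz] with w hw
        rw [hρ₁ w hw]; push_cast; ring
      rw [wirtingerZ_congr hev]
      have hu : DifferentiableAt ℝ (fun w => ((ρ (b w) : ℝ) : ℂ)) (f z) :=
        hρd.comp (f z) ((hb.differentiableAt (hA₂.mem_nhds hfz)).restrictScalars ℝ)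
      have hv : DifferentiableAt ℝ (fun w => ((‖deriv b w‖ : ℝ) : ℂ)) (f z) :=
        DifferentiableAt.comp (f z) habs.1 ((hb'an _ hfz).differentiableAt.restrictScalars ℝ)
      rw [(wirtinger_mul (u := fun w => ((ρ (b w) : ℝ) : ℂ))
        (v := fun w => ((‖deriv b w‖ : ℝ) : ℂ)) hu hv).1]
      have h1 : wirtingerZ (fun w => ((ρ (b w) : ℝ) : ℂ)) (f z)
          = wirtingerZ (fun y => ((ρ y : ℝ) : ℂ)) (b (f z)) * B :=
        (wirtinger_comp_right (hbd _ hfz) hρd).1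
      have h2 : wirtingerZ (fun w => ((‖deriv b w‖ : ℝ) : ℂ)) (f z)
          = ((starRingEnd ℂ) B / (2 * ((‖B‖ : ℝ) : ℂ))) * B2 := by
        rw [(wirtinger_comp_right (hb2d _ hfz) habs.1).1, habs.2]
      rw [h1, h2]
    have hρ₁val : ((ρ₁ (f z) : ℝ) : ℂ) = ((ρ (b (f z)) : ℝ) : ℂ) * ((‖B‖ : ℝ) : ℂ) := by
      rw [hρ₁ _ hfz]; push_cast; ring
    rw [hA, hcompZbar, hcompZ z hz, hWρ₁, hρ₁val, hconj]
    field_simp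
    ring
  unfold IsRhoHarmonicOn
  refine forall₂_congr fun z hz => ?_
  rw [key z hz]
  rw [mul_eq_zero]
  simp [hb' _ (hfmaps hz)]
end
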